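/- arXiv:1012.1942 — 2 statements merged into one kernel-verified Lean document; each statement's English description precedes it below -/
import Mathlib

section
/- Let d ≥ 2 be a fixed integer and c₀ ≥ 1 a constant. There exists N such that for every n ≥ N the following holds: if G is a graph on n vertices in which every two distinct vertices are connected by at least 2^{10d}·c₀·log n internally vertex-disjoint paths of length exactly d, then rc_k(G) ≤ d for every integer k with 1 ≤ k ≤ c₀·log n. -/
open MeasureTheory Filter
open scoped ENNReal

noncomputable section

namespace RainbowFormal

/-- The random graph on `Fin n` determined by an indicator function on potential edges. -/
def graphOf {n : ℕ} (f : Sym2 (Fin n) → Bool) : SimpleGraph (Fin n) :=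
  SimpleGraph.fromEdgeSet {e | f e = true}

/-- The Erdős–Rényi measure: each potential edge appears independently with probability `p`. -/
def edgeMeasure (n : ℕ) (p : ℝ) : Measure (Sym2 (Fin n) → Bool) :=
  Measure.pi fun _ => (PMF.bernoulli (min (Real.toNNReal p) 1) (min_le_right _ _)).toMeasure

instance (n : ℕ) (p : ℝ) : IsProbabilityMeasure (edgeMeasure n p) := by
  unfold edgeMeasure; infer_instance

/-- A walk is a rainbow path (w.r.t. coloring `χ`) if it is a path whose edges get
pairwise distinct colors. -/
def IsRainbowPath {V : Type*} {G : SimpleGraph V} {u v : V} (χ : Sym2 V → ℕ)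
    (p : G.Walk u v) : Prop :=
  p.IsPath ∧ (p.edges.map χ).Nodup

/-- A family of walks between two fixed vertices is internally (vertex-)disjoint if the walks
are pairwise distinct and share no vertex except the two endpoints. -/
def InternallyDisjoint {V : Type*} {G : SimpleGraph V} {u v : V} {k : ℕ}
    (P : Fin k → G.Walk u v) : Prop :=
  ∀ i j, i ≠ j → P i ≠ P j ∧
    ∀ w, w ∈ (P i).support → w ∈ (P j).support → w = u ∨ w = v

/-- The coloring `χ` makes `G` rainbow-`k`-connected: any two distinct vertices are joined by
at least `k` internally vertex-disjoint rainbow paths. -/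
def RainbowKConnectedColoring {V : Type*} (G : SimpleGraph V) (k : ℕ)
    (χ : Sym2 V → ℕ) : Prop :=
  ∀ u v : V, u ≠ v → ∃ P : Fin k → G.Walk u v,
    (∀ i, IsRainbowPath χ (P i)) ∧ InternallyDisjoint P

/-- The rainbow-`k`-connectivity of `G`: the least number `m` of colors in a coloring making `G`
rainbow-`k`-connected, as an extended natural number (`⊤` if no such coloring exists). -/
def rc {V : Type*} (G : SimpleGraph V) (k : ℕ) : ℕ∞ :=
  sInf {t : ℕ∞ | ∃ m : ℕ, t = (m : ℕ∞) ∧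
    ∃ χ : Sym2 V → ℕ, (∀ e, χ e < m) ∧ RainbowKConnectedColoring G k χ}

/-- Every two distinct vertices of `G` are joined by at least `m` internally vertex-disjoint
paths of length exactly `d`. -/
def ManyDisjointPaths {V : Type*} (G : SimpleGraph V) (d m : ℕ) : Prop :=
  ∀ u v : V, u ≠ v → ∃ P : Fin m → G.Walk u v,
    (∀ i, (P i).IsPath ∧ (P i).length = d) ∧ InternallyDisjoint P

/-- The uniform measure on a set of `d` colors. -/
def colorMeasure (d : ℕ) (hd : d ≠ 0) : Measure (Fin d) :=
  haveI : NeZero d := ⟨hd⟩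
  (PMF.uniformOfFintype (Fin d)).toMeasure

/-- The joint distribution of an Erdős–Rényi random graph together with an independent
uniformly random `d`-coloring of all potential edges. -/
def jointMeasure (n : ℕ) (p : ℝ) (d : ℕ) (hd : d ≠ 0) :
    Measure (Sym2 (Fin n) → Bool × Fin d) :=
  Measure.pi fun _ =>
    ((PMF.bernoulli (min (Real.toNNReal p) 1) (min_le_right _ _)).toMeasure.prod
      (colorMeasure d hd))

/-- The binary entropy function (base-2 logarithm). -/
def binH (x : ℝ) : ℝ :=
  x * Real.logb 2 (1/x) + (1-x) * Real.logb 2 (1/(1-x))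

section Counting
open Finset
set_option linter.unusedSectionVars false
variable {α β : Type*} [DecidableEq α] [Fintype α] [Fintype β] [DecidableEq β]

lemma card_filter_and_mul
    (A B : (α → β) → Prop) [DecidablePred A] [DecidablePred B]
    (sA sB : Finset α) (hdisj : Disjoint sA sB)
    (hA : ∀ f g : α → β, (∀ x ∈ sA, f x = g x) → A f → A g)
    (hB : ∀ f g : α → β, (∀ x ∈ sB, f x = g x) → B f → B g) :
    (Finset.univ.filter fun f : α → β => A f ∧ B f).card * Fintype.card (α → β) =
      (Finset.univ.filter A).card * (Finset.univ.filter B).card := by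
  classical
  have hagreeA : ∀ f g : α → β, (∀ x ∈ sA, f x = g x) → (A f ↔ A g) :=
    fun f g h => ⟨hA f g h, hA g f fun x hx => (h x hx).symm⟩
  have hagreeB : ∀ f g : α → β, (∀ x ∈ sB, f x = g x) → (B f ↔ B g) :=
    fun f g h => ⟨hB f g h, hB g f fun x hx => (h x hx).symm⟩
  have hpw : ∀ f g : α → β, ∀ x ∈ sA, sB.piecewise g f x = f x := by
    intro f g x hx
    have : x ∉ sB := fun hxB => (Finset.disjoint_left.1 hdisj hx) hxB
    simp [Finset.piecewise_eq_of_notMem _ _ _ this]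
  have key : (((Finset.univ.filter fun f : α → β => A f ∧ B f) ×ˢ (Finset.univ : Finset (α → β))).card : ℕ)
      = ((Finset.univ.filter A) ×ˢ (Finset.univ.filter B)).card := by
    refine Finset.card_nbij'
      (i := fun fg => (sB.piecewise fg.2 fg.1, sB.piecewise fg.1 fg.2))
      (j := fun fg => (sB.piecewise fg.2 fg.1, sB.piecewise fg.1 fg.2)) ?_ ?_ ?_ ?_
    · rintro ⟨f, g⟩ hfg
      simp only [Finset.mem_coe, Finset.mem_product, Finset.mem_filter, Finset.mem_univ, true_and,
        and_true] at hfg ⊢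
      refine ⟨?_, ?_⟩
      · exact hA f _ (fun x hx => (hpw f g x hx).symm) hfg.1
      · exact hB f _ (fun x hx => by simp [Finset.piecewise_eq_of_mem _ _ _ hx]) hfg.2
    · rintro ⟨f, g⟩ hfg
      simp only [Finset.mem_coe, Finset.mem_product, Finset.mem_filter, Finset.mem_univ, true_and,
        and_true] at hfg ⊢
      constructor
      · exact hA f _ (fun x hx => (hpw f g x hx).symm) hfg.1
      · exact hB g _ (fun x hx => by simp [Finset.piecewise_eq_of_mem _ _ _ hx]) hfg.2
    · rintro ⟨f, g⟩ _
      refine Prod.ext ?_ ?_ <;>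
        · funext x
          by_cases hx : x ∈ sB <;> simp [Finset.piecewise, hx]
    · rintro ⟨f, g⟩ _
      refine Prod.ext ?_ ?_ <;>
        · funext x
          by_cases hx : x ∈ sB <;> simp [Finset.piecewise, hx]
  simpa [Finset.card_product] using key

lemma card_filter_forall_mul {m : ℕ}
    (s : Fin m → Finset α) (hs : ∀ i j, i ≠ j → Disjoint (s i) (s j))
    (Bd : Fin m → (α → β) → Prop) [∀ i, DecidablePred (Bd i)]
    (hBd : ∀ i, ∀ f g : α → β, (∀ x ∈ s i, f x = g x) → Bd i f → Bd i g)
    (T : Finset (Fin m)) :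
    (Finset.univ.filter fun f : α → β => ∀ i ∈ T, Bd i f).card
        * Fintype.card (α → β) ^ T.card
      = (∏ i ∈ T, (Finset.univ.filter (Bd i)).card) * Fintype.card (α → β) := by
  classical
  induction T using Finset.induction with
  | empty => simp
  | @insert a T ha ih =>
    have hstep := card_filter_and_mul (Bd a) (fun f => ∀ i ∈ T, Bd i f)
      (s a) (T.biUnion s)
      (by
        rw [Finset.disjoint_biUnion_right]
        exact fun i hi => hs a i (by rintro rfl; exact ha hi))
      (hBd a)
      (by
        intro f g hagree hf i hi
        exact hBd i f g (fun x hx => hagree x (Finset.mem_biUnion.2 ⟨i, hi, hx⟩)) (hf i hi))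
    have hfilter : (Finset.univ.filter fun f : α → β => ∀ i ∈ insert a T, Bd i f)
        = Finset.univ.filter fun f : α → β => Bd a f ∧ ∀ i ∈ T, Bd i f := by
      apply Finset.filter_congr
      intro f _
      simp [Finset.forall_mem_insert]
    rw [hfilter, Finset.card_insert_of_notMem ha, Finset.prod_insert ha, pow_succ']
    calc (Finset.univ.filter fun f : α → β => Bd a f ∧ ∀ i ∈ T, Bd i f).card *
          (Fintype.card (α → β) * Fintype.card (α → β) ^ T.card)
        = ((Finset.univ.filter fun f : α → β => Bd a f ∧ ∀ i ∈ T, Bd i f).card *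
            Fintype.card (α → β)) * Fintype.card (α → β) ^ T.card := by ring
      _ = ((Finset.univ.filter (Bd a)).card *
            (Finset.univ.filter fun f : α → β => ∀ i ∈ T, Bd i f).card) *
            Fintype.card (α → β) ^ T.card := by rw [hstep]
      _ = (Finset.univ.filter (Bd a)).card *
            ((Finset.univ.filter fun f : α → β => ∀ i ∈ T, Bd i f).card *
            Fintype.card (α → β) ^ T.card) := by ring
      _ = (Finset.univ.filter (Bd a)).card *
            ((∏ i ∈ T, (Finset.univ.filter (Bd i)).card) * Fintype.card (α → β)) := by rw [ih]
      _ = (Finset.univ.filter (Bd a)).card * (∏ i ∈ T, (Finset.univ.filter (Bd i)).card) *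
            Fintype.card (α → β) := by ring

set_option maxHeartbeats 1000000 in
lemma card_filter_nodup_map_ge
    (l : List α) (hl : l.Nodup) (hcard : l.length = Fintype.card β) :
    Nat.factorial (Fintype.card β) * Fintype.card β ^ (Fintype.card α - l.length)
      ≤ (Finset.univ.filter fun f : α → β => (l.map f).Nodup).card := by
  classical
  have hc : Fintype.card {x // x ∈ l.toFinset} = Fintype.card β := by
    rw [Fintype.card_coe, List.toFinset_card_of_nodup hl, hcard]
  let eqv : {x // x ∈ l.toFinset} ≃ β := Fintype.equivOfCardEq hc
  let F : Equiv.Perm β × ({x // x ∉ l.toFinset} → β) → (α → β) := fun σh x =>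
    if hx : x ∈ l.toFinset then σh.1 (eqv ⟨x, hx⟩) else σh.2 ⟨x, hx⟩
  have hmem : ∀ σh, ((l.map (F σh)).Nodup) := by
    intro σh
    refine List.Nodup.map_on ?_ hl
    intro x hx y hy hxy
    have hx' : x ∈ l.toFinset := List.mem_toFinset.2 hx
    have hy' : y ∈ l.toFinset := List.mem_toFinset.2 hy
    simp only [F, dif_pos hx', dif_pos hy'] at hxy
    have := eqv.injective (σh.1.injective hxy)
    exact Subtype.ext_iff.1 this
  have hinj : Function.Injective
      (fun σh => (⟨F σh, hmem σh⟩ :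
        {f : α → β // (l.map f).Nodup})) := by
    rintro ⟨σ, h⟩ ⟨σ', h'⟩ heq
    simp only [Subtype.mk_eq_mk] at heq
    have heq' : F (σ, h) = F (σ', h') := heq
    refine Prod.ext ?_ ?_
    · ext b
      have hb := congrFun heq' (eqv.symm b : {x // x ∈ l.toFinset})
      simp only [F, dif_pos (eqv.symm b).2] at hb
      simpa using hb
    · ext x
      have hx := congrFun heq' x.1
      simp only [F, dif_neg x.2] at hx
      exact hx
  have := Fintype.card_le_of_injective _ hinj
  rw [Fintype.card_subtype] at this
  refine le_trans (le_of_eq ?_) this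
  rw [Fintype.card_prod, Fintype.card_perm, Fintype.card_fun]
  congr 1
  rw [Fintype.card_subtype_compl, Fintype.card_coe, List.toFinset_card_of_nodup hl]

end Counting

lemma endpoints_edge_not_mem {V : Type*} {G : SimpleGraph V} {u v : V}
    (p : G.Walk u v) (hp : p.IsPath) (hlen : 2 ≤ p.length) :
    s(u, v) ∉ p.edges := by
  cases p with
  | nil => simp at hlen
  | cons h q =>
    rename_i w
    intro hmem
    rw [SimpleGraph.Walk.edges_cons] at hmem
    rcases List.mem_cons.1 hmem with heq | hmem'
    · rw [Sym2.eq_iff] at heq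
      rcases heq with ⟨-, rfl⟩ | ⟨rfl, hvu⟩
      · -- q : G.Walk v v is a path, so q = nil, contradicting length
        have hq : q.IsPath := hp.of_cons
        cases q with
        | nil => simp [SimpleGraph.Walk.length_cons] at hlen
        | cons h' r =>
          have := hq.support_nodup
          rw [SimpleGraph.Walk.support_cons] at this
          exact (List.nodup_cons.1 this).1 r.end_mem_support
      · exact G.irrefl h
    · have hu : u ∈ q.support := q.fst_mem_support_of_mem_edges hmem'
      have := hp.support_nodup
      rw [SimpleGraph.Walk.support_cons] at this
      exact (List.nodup_cons.1 this).1 hu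

lemma edges_toFinset_disjoint {V : Type*} [DecidableEq V] {G : SimpleGraph V} {u v : V}
    (huv : u ≠ v) {m : ℕ} (P : Fin m → G.Walk u v)
    (hpath : ∀ i, (P i).IsPath) (hlen : ∀ i, 2 ≤ (P i).length)
    (hdisj : InternallyDisjoint P) :
    ∀ i j, i ≠ j → Disjoint (P i).edges.toFinset (P j).edges.toFinset := by
  intro i j hij
  rw [Finset.disjoint_left]
  intro e hei hej
  rw [List.mem_toFinset] at hei hej
  induction e with
  | h a b =>
    have hai : a ∈ (P i).support := (P i).fst_mem_support_of_mem_edges hei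
    have haj : a ∈ (P j).support := (P j).fst_mem_support_of_mem_edges hej
    have hbi : b ∈ (P i).support := (P i).snd_mem_support_of_mem_edges hei
    have hbj : b ∈ (P j).support := (P j).snd_mem_support_of_mem_edges hej
    have ha := (hdisj i j hij).2 a hai haj
    have hb := (hdisj i j hij).2 b hbi hbj
    have hab : a ≠ b := G.ne_of_adj ((P i).edges_subset_edgeSet hei)
    have heq : s(a, b) = s(u, v) := by
      rcases ha with rfl | rfl
      · rcases hb with rfl | rfl
        · exact absurd rfl hab
        · rfl
      · rcases hb with rfl | rfl
        · exact Sym2.eq_swap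
        · exact absurd rfl hab
    rw [heq] at hei
    exact endpoints_edge_not_mem (P i) (hpath i) (hlen i) hei

lemma pow_self_le_three_pow_mul_factorial (t : ℕ) :
    (t : ℝ) ^ t ≤ 3 ^ t * (Nat.factorial t : ℝ) := by
  induction t with
  | zero => simp
  | succ t ih =>
    have key : ((t + 1 : ℕ) : ℝ) ^ t ≤ 3 ^ (t + 1) * (Nat.factorial t : ℝ) := by
      rcases Nat.eq_zero_or_pos t with rfl | ht
      · norm_num
      · have htpos : (0 : ℝ) < t := by positivity
        have h1 : ((t + 1 : ℕ) : ℝ) ^ t = (t : ℝ) ^ t * (1 + 1 / t) ^ t := by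
          rw [← mul_pow]
          congr 1
          push_cast
          field_simp
        have h2 : (1 + 1 / (t : ℝ)) ^ t ≤ 3 := by
          have hle : (1 + 1 / (t : ℝ)) ≤ Real.exp (1 / t) := by
            have := Real.add_one_le_exp (1 / (t : ℝ))
            linarith
          have h3 : (1 + 1 / (t : ℝ)) ^ t ≤ Real.exp (1 / t) ^ t := by
            apply pow_le_pow_left₀ (by positivity) hle
          rw [← Real.exp_nat_mul] at h3
          have : (t : ℝ) * (1 / t) = 1 := by field_simp
          rw [this] at h3
          exact h3.trans (by
            have := Real.exp_one_lt_d9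
            linarith)
        calc ((t + 1 : ℕ) : ℝ) ^ t = (t : ℝ) ^ t * (1 + 1 / t) ^ t := h1
          _ ≤ (3 ^ t * (Nat.factorial t : ℝ)) * 3 := by
              apply mul_le_mul ih h2 (by positivity) (by positivity)
          _ = 3 ^ (t + 1) * (Nat.factorial t : ℝ) := by ring
    calc ((t + 1 : ℕ) : ℝ) ^ (t + 1) = ((t + 1 : ℕ) : ℝ) ^ t * ((t + 1 : ℕ) : ℝ) := by ring
      _ ≤ (3 ^ (t + 1) * (Nat.factorial t : ℝ)) * ((t + 1 : ℕ) : ℝ) := by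
          apply mul_le_mul_of_nonneg_right key (by positivity)
      _ = 3 ^ (t + 1) * (Nat.factorial (t + 1) : ℝ) := by
          rw [Nat.factorial_succ]
          push_cast
          ring

lemma linear_lt_pow (d : ℕ) (hd : 1 ≤ d) : 10 * d + 7 ≤ 2 ^ (7 * d) := by
  induction d with
  | zero => omega
  | succ d ih =>
    rcases Nat.eq_zero_or_pos d with rfl | hd'
    · norm_num
    · have h1 := ih hd'
      have h2 : (2:ℕ) ^ (7 * d) ≥ 1 := Nat.one_le_two_pow
      have : 2 ^ (7 * (d + 1)) = 2 ^ (7 * d) * 128 := by ring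
      omega


set_option maxHeartbeats 1000000 in
lemma card_bad_le {n d m k : ℕ} (hd : 2 ≤ d) (hk : 1 ≤ k) (hkm : k ≤ m)
    {G : SimpleGraph (Fin n)} {u v : Fin n} (huv : u ≠ v)
    (P : Fin m → G.Walk u v)
    (hP : ∀ i, (P i).IsPath ∧ (P i).length = d)
    (hdisj : InternallyDisjoint P) :
    (Finset.univ.filter fun χ : Sym2 (Fin n) → Fin d =>
        (Finset.univ.filter fun i : Fin m => ((P i).edges.map χ).Nodup).card < k).card
      * (d ^ d) ^ (m - k + 1)
    ≤ m.choose (m - k + 1) * (d ^ d - Nat.factorial d) ^ (m - k + 1)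
      * Fintype.card (Sym2 (Fin n) → Fin d) := by
  classical
  set r := m - k + 1 with hr
  set N := Fintype.card (Sym2 (Fin n)) with hN
  set Dc := Fintype.card (Sym2 (Fin n) → Fin d) with hDc
  have hDcval : Dc = d ^ N := by
    rw [hDc, Fintype.card_fun, Fintype.card_fin]
  have hDcpos : 0 < Dc := by
    rw [hDcval]; positivity
  -- edge finsets
  set s : Fin m → Finset (Sym2 (Fin n)) := fun i => (P i).edges.toFinset with hsdef
  have hnodup : ∀ i, (P i).edges.Nodup := fun i => ((hP i).1.isTrail).edges_nodup
  have hlenE : ∀ i, (P i).edges.length = d := fun i => by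
    rw [SimpleGraph.Walk.length_edges, (hP i).2]
  have hscard : ∀ i, (s i).card = d := fun i => by
    rw [hsdef]; simp only
    rw [List.toFinset_card_of_nodup (hnodup i), hlenE i]
  have hs : ∀ i j, i ≠ j → Disjoint (s i) (s j) :=
    edges_toFinset_disjoint huv P (fun i => (hP i).1)
      (fun i => by rw [(hP i).2]; exact hd) hdisj
  -- bad events
  set Bd : Fin m → (Sym2 (Fin n) → Fin d) → Prop :=
    fun i χ => ¬ ((P i).edges.map χ).Nodup with hBddef
  have hBd : ∀ i, ∀ f g : Sym2 (Fin n) → Fin d,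
      (∀ x ∈ s i, f x = g x) → Bd i f → Bd i g := by
    intro i f g hagree hf hg
    apply hf
    have : (P i).edges.map f = (P i).edges.map g :=
      List.map_congr_left fun a ha => hagree a (List.mem_toFinset.2 ha)
    rw [this]; exact hg
  have hdN : d ≤ N := by
    have := Finset.card_le_univ (s ⟨0, lt_of_lt_of_le hk hkm⟩)
    rw [hscard] at this
    rw [hN]
    exact this
  -- per-path bound
  have hper : ∀ i, (Finset.univ.filter (Bd i)).card * d ^ d
      ≤ (d ^ d - Nat.factorial d) * Dc := by
    intro i
    have hrb : Nat.factorial d * d ^ (N - d)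
        ≤ (Finset.univ.filter fun χ : Sym2 (Fin n) → Fin d =>
            ((P i).edges.map χ).Nodup).card := by
      have := card_filter_nodup_map_ge (β := Fin d) (P i).edges (hnodup i)
        (by rw [hlenE i, Fintype.card_fin])
      rwa [Fintype.card_fin, hlenE i, ← hN] at this
    have hbd_eq : (Finset.univ.filter (Bd i)).card
        = Dc - (Finset.univ.filter fun χ : Sym2 (Fin n) → Fin d =>
            ((P i).edges.map χ).Nodup).card := by
      simp only [hBddef]
      rw [Finset.filter_not, Finset.card_sdiff_of_subset (Finset.filter_subset _ _),
        Finset.card_univ]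
    rw [hbd_eq, Nat.sub_mul]
    set cRb := (Finset.univ.filter fun χ : Sym2 (Fin n) → Fin d =>
        ((P i).edges.map χ).Nodup).card
    have h1 : Nat.factorial d * Dc ≤ cRb * d ^ d := by
      calc Nat.factorial d * Dc = Nat.factorial d * (d ^ (N - d) * d ^ d) := by
            rw [hDcval, pow_sub_mul_pow _ hdN]
        _ = (Nat.factorial d * d ^ (N - d)) * d ^ d := by ring
        _ ≤ cRb * d ^ d := Nat.mul_le_mul_right _ hrb
    calc Dc * d ^ d - cRb * d ^ d ≤ Dc * d ^ d - Nat.factorial d * Dc :=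
          Nat.sub_le_sub_left h1 _
      _ = (d ^ d - Nat.factorial d) * Dc := by
          rw [Nat.sub_mul]
          congr 1
          ring
  -- subset of union over T
  have hsubset : (Finset.univ.filter fun χ : Sym2 (Fin n) → Fin d =>
        (Finset.univ.filter fun i : Fin m => ((P i).edges.map χ).Nodup).card < k)
      ⊆ (Finset.powersetCard r (Finset.univ : Finset (Fin m))).biUnion
          (fun T => Finset.univ.filter fun χ : Sym2 (Fin n) → Fin d => ∀ i ∈ T, Bd i χ) := by
    intro χ hχ
    rw [Finset.mem_filter] at hχ
    have hcnt := hχ.2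
    have hbadcard : r ≤ (Finset.univ.filter fun i : Fin m => Bd i χ).card := by
      have : (Finset.univ.filter fun i : Fin m => Bd i χ).card
          = m - (Finset.univ.filter fun i : Fin m => ((P i).edges.map χ).Nodup).card := by
        simp only [hBddef]
        rw [Finset.filter_not, Finset.card_sdiff_of_subset (Finset.filter_subset _ _),
          Finset.card_univ, Fintype.card_fin]
      omega
    obtain ⟨T, hT, hTcard⟩ := Finset.exists_subset_card_eq hbadcard
    rw [Finset.mem_biUnion]
    refine ⟨T, ?_, ?_⟩
    · rw [Finset.mem_powersetCard]
      exact ⟨Finset.subset_univ _, hTcard⟩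
    · rw [Finset.mem_filter]
      exact ⟨Finset.mem_univ _, fun i hi => (Finset.mem_filter.1 (hT hi)).2⟩
  -- per-T bound
  have hperT : ∀ T ∈ Finset.powersetCard r (Finset.univ : Finset (Fin m)),
      (Finset.univ.filter fun χ : Sym2 (Fin n) → Fin d => ∀ i ∈ T, Bd i χ).card
        * (d ^ d) ^ r ≤ (d ^ d - Nat.factorial d) ^ r * Dc := by
    intro T hT
    rw [Finset.mem_powersetCard] at hT
    have hkey := card_filter_forall_mul s hs Bd hBd T
    rw [hT.2, ← hDc] at hkey
    have step : (Finset.univ.filter fun χ : Sym2 (Fin n) → Fin d => ∀ i ∈ T, Bd i χ).card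
        * (d ^ d) ^ r * Dc ^ r
        = (∏ i ∈ T, ((Finset.univ.filter (Bd i)).card * d ^ d)) * Dc := by
      rw [Finset.prod_mul_distrib, Finset.prod_const, hT.2]
      calc _ = ((Finset.univ.filter fun χ : Sym2 (Fin n) → Fin d => ∀ i ∈ T, Bd i χ).card
            * Dc ^ r) * (d ^ d) ^ r := by ring
        _ = ((∏ i ∈ T, (Finset.univ.filter (Bd i)).card) * Dc) * (d ^ d) ^ r := by rw [hkey]
        _ = _ := by ring
    have hprod : (∏ i ∈ T, ((Finset.univ.filter (Bd i)).card * d ^ d)) * Dc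
        ≤ ((d ^ d - Nat.factorial d) * Dc) ^ r * Dc := by
      apply Nat.mul_le_mul_right
      calc ∏ i ∈ T, ((Finset.univ.filter (Bd i)).card * d ^ d)
          ≤ ∏ _i ∈ T, ((d ^ d - Nat.factorial d) * Dc) :=
            Finset.prod_le_prod' fun i _ => hper i
        _ = ((d ^ d - Nat.factorial d) * Dc) ^ r := by
            rw [Finset.prod_const, hT.2]
    have := step.le.trans hprod
    have h2 : ((d ^ d - Nat.factorial d) * Dc) ^ r * Dc
        = ((d ^ d - Nat.factorial d) ^ r * Dc) * Dc ^ r := by ring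
    rw [h2] at this
    exact Nat.le_of_mul_le_mul_right this (Nat.pow_pos hDcpos)
  -- combine
  calc (Finset.univ.filter fun χ : Sym2 (Fin n) → Fin d =>
        (Finset.univ.filter fun i : Fin m => ((P i).edges.map χ).Nodup).card < k).card
      * (d ^ d) ^ r
      ≤ ((Finset.powersetCard r (Finset.univ : Finset (Fin m))).biUnion
          (fun T => Finset.univ.filter fun χ : Sym2 (Fin n) → Fin d => ∀ i ∈ T, Bd i χ)).card
        * (d ^ d) ^ r := Nat.mul_le_mul_right _ (Finset.card_le_card hsubset)
    _ ≤ (∑ T ∈ Finset.powersetCard r (Finset.univ : Finset (Fin m)),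
          (Finset.univ.filter fun χ : Sym2 (Fin n) → Fin d => ∀ i ∈ T, Bd i χ).card)
        * (d ^ d) ^ r := Nat.mul_le_mul_right _ (Finset.card_biUnion_le)
    _ = ∑ T ∈ Finset.powersetCard r (Finset.univ : Finset (Fin m)),
          (Finset.univ.filter fun χ : Sym2 (Fin n) → Fin d => ∀ i ∈ T, Bd i χ).card
        * (d ^ d) ^ r := by rw [Finset.sum_mul]
    _ ≤ ∑ _T ∈ Finset.powersetCard r (Finset.univ : Finset (Fin m)),
          (d ^ d - Nat.factorial d) ^ r * Dc := Finset.sum_le_sum hperT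
    _ = (Finset.powersetCard r (Finset.univ : Finset (Fin m))).card
        * ((d ^ d - Nat.factorial d) ^ r * Dc) := by rw [Finset.sum_const, smul_eq_mul]
    _ = m.choose r * (d ^ d - Nat.factorial d) ^ r * Dc := by
        rw [Finset.card_powersetCard, Finset.card_univ, Fintype.card_fin]
        ring

set_option maxHeartbeats 2000000 in
lemma numeric_bound {d k m n : ℕ} {c₀ : ℝ} (hd : 2 ≤ d) (hc₀ : 1 ≤ c₀)
    (hn : 2 ≤ n) (hk1 : 1 ≤ k) (hkm : k ≤ m)
    (hkL : (k : ℝ) ≤ c₀ * Real.logb 2 n)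
    (hmlow : (2:ℝ) ^ (10 * d) * (c₀ * Real.logb 2 n) ≤ (m:ℝ))
    (hmhigh : (m:ℝ) ≤ (2:ℝ) ^ (10 * d) * (c₀ * Real.logb 2 n) + 1) :
    (n:ℝ) ^ 2 * (m.choose (m - k + 1)) *
        (((d ^ d - Nat.factorial d : ℕ) : ℝ)) ^ (m - k + 1)
      < ((d:ℝ) ^ d) ^ (m - k + 1) := by
  have hd1 : 1 ≤ d := le_trans (by norm_num) hd
  set L : ℝ := c₀ * Real.logb 2 n with hL
  have hlogb1 : (1:ℝ) ≤ Real.logb 2 n := by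
    have : Real.logb 2 2 ≤ Real.logb 2 n :=
      Real.logb_le_logb_of_le (by norm_num) (by norm_num) (by exact_mod_cast hn)
    rwa [Real.logb_self_eq_one (by norm_num)] at this
  have hL1 : (1:ℝ) ≤ L := by
    rw [hL]
    nlinarith
  have hLpos : (0:ℝ) < L := lt_of_lt_of_le one_pos hL1
  set r : ℕ := m - k + 1 with hr
  set t : ℕ := k - 1 with ht
  have hchoose : m.choose r = m.choose t := by
    have h1 : r = m - t := by omega
    rw [h1, Nat.choose_symm (by omega)]
  have htR : (t:ℝ) = (k:ℝ) - 1 := by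
    rw [ht]
    push_cast [Nat.cast_sub hk1]
    ring
  have hrR : (r:ℝ) = (m:ℝ) - (k:ℝ) + 1 := by
    rw [hr]
    push_cast [Nat.cast_sub hkm]
    ring
  have htL : (t:ℝ) ≤ L := by rw [htR]; linarith
  -- basic positivity
  have hD2pos : (0:ℝ) < (d:ℝ) ^ d := by positivity
  have hFpos : (0:ℝ) < (Nat.factorial d : ℝ) := by exact_mod_cast (Nat.factorial_pos d)
  have hFle : (Nat.factorial d : ℝ) ≤ (d:ℝ) ^ d := by
    exact_mod_cast Nat.factorial_le_pow d
  have hcast : (((d ^ d - Nat.factorial d : ℕ) : ℝ)) =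
      (d:ℝ) ^ d - (Nat.factorial d : ℝ) := by
    push_cast [Nat.cast_sub (Nat.factorial_le_pow d)]
    ring
  set q : ℝ := 1 - (Nat.factorial d : ℝ) / ((d:ℝ) ^ d) with hq
  have hq0 : 0 ≤ q := by
    rw [hq]
    have : (Nat.factorial d : ℝ) / ((d:ℝ) ^ d) ≤ 1 := by
      rw [div_le_one hD2pos]; exact hFle
    linarith
  have hqeq : (((d ^ d - Nat.factorial d : ℕ) : ℝ)) = q * ((d:ℝ) ^ d) := by
    rw [hcast, hq]
    field_simp
  -- reduce to fraction form
  rw [hqeq, mul_pow]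
  have hgoal : (n:ℝ) ^ 2 * (m.choose r) * q ^ r < 1 := by
    -- (A) n^2 ≤ exp (2 L)
    have hA : (n:ℝ) ^ 2 ≤ Real.exp (2 * L) := by
      have hnpos : (0:ℝ) < n := by positivity
      have hlogn : Real.log n ≤ L := by
        have h1 : Real.log n = Real.logb 2 n * Real.log 2 := by
          rw [Real.logb, div_mul_cancel₀]
          exact Real.log_ne_zero_of_pos_of_ne_one (by norm_num) (by norm_num)
        have h2 : Real.log 2 ≤ 1 := by
          have := Real.log_two_lt_d9
          linarith
        have h3 : (0:ℝ) ≤ Real.logb 2 n := le_trans one_pos.le hlogb1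
        calc Real.log n = Real.logb 2 n * Real.log 2 := h1
          _ ≤ Real.logb 2 n * 1 := by nlinarith
          _ ≤ L := by rw [hL]; nlinarith
      have hn_exp : (n:ℝ) ≤ Real.exp L := by
        calc (n:ℝ) = Real.exp (Real.log n) := (Real.exp_log hnpos).symm
          _ ≤ Real.exp L := Real.exp_le_exp.2 hlogn
      calc (n:ℝ) ^ 2 ≤ Real.exp L ^ 2 := by
            apply pow_le_pow_left₀ (le_of_lt hnpos) hn_exp
        _ = Real.exp ((2:ℕ) * L) := by rw [Real.exp_nat_mul]
        _ = Real.exp (2 * L) := by norm_num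
    -- (B)+(C) choose bound
    have hC : ((m.choose r : ℕ) : ℝ) ≤ Real.exp ((10 * d + 4) * L) := by
      rw [hchoose]
      have hB : ((m.choose t : ℕ) : ℝ) ≤ (m:ℝ) ^ t / (Nat.factorial t : ℝ) :=
        Nat.choose_le_pow_div t m
      have hCC : (m:ℝ) ^ t / (Nat.factorial t : ℝ) ≤ Real.exp ((10 * d + 4) * L) := by
        rcases Nat.eq_zero_or_pos t with h0 | htpos
        · rw [h0]
          simp only [pow_zero, Nat.factorial_zero, Nat.cast_one, div_one]
          apply Real.one_le_exp
          positivity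
        · have htRpos : (0:ℝ) < t := by exact_mod_cast htpos
          have hmub : (m:ℝ) ≤ 2 ^ (10 * d + 1) * L := by
            have h1 : (1:ℝ) ≤ 2 ^ (10 * d) * L := by
              have : (1:ℝ) ≤ (2:ℝ) ^ (10 * d) := one_le_pow₀ one_le_two
              nlinarith
            calc (m:ℝ) ≤ 2 ^ (10 * d) * L + 1 := hmhigh
              _ ≤ 2 ^ (10 * d) * L + 2 ^ (10 * d) * L := by linarith
              _ = 2 ^ (10 * d + 1) * L := by rw [pow_succ]; ring
          have hstep1 : (m:ℝ) ^ t / (Nat.factorial t : ℝ) ≤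
              (3 ^ t * (m:ℝ) ^ t) / (t:ℝ) ^ t := by
            rw [div_le_div_iff₀ (by exact_mod_cast Nat.factorial_pos t) (by positivity)]
            have hts := pow_self_le_three_pow_mul_factorial t
            have hmt : (0:ℝ) ≤ (m:ℝ) ^ t := by positivity
            nlinarith
          have hstep2 : (3 ^ t * (m:ℝ) ^ t) / (t:ℝ) ^ t
              = (3 * (m:ℝ) / t) ^ t := by
            rw [div_pow, mul_pow]
          have hstep3 : (3 * (m:ℝ) / t) ≤ 2 ^ (10 * d + 3) * (L / t) := by
            rw [div_le_iff₀ htRpos]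
            have : 3 * (m:ℝ) ≤ 2 ^ (10 * d + 3) * L := by
              calc 3 * (m:ℝ) ≤ 3 * (2 ^ (10 * d + 1) * L) := by linarith [hmub]
                _ ≤ 4 * (2 ^ (10 * d + 1) * L) := by nlinarith [hmub, hLpos]
                _ = 2 ^ (10 * d + 3) * L := by rw [pow_succ, pow_succ]; ring
            calc 3 * (m:ℝ) ≤ 2 ^ (10 * d + 3) * L := this
              _ = 2 ^ (10 * d + 3) * (L / t) * t := by field_simp
          have hLt0 : (0:ℝ) ≤ L / t := by positivity
          have h3m0 : (0:ℝ) ≤ 3 * (m:ℝ) / t := by positivity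
          have hstep4 : (3 * (m:ℝ) / t) ^ t ≤ (2 ^ (10 * d + 3) * (L / t)) ^ t :=
            pow_le_pow_left₀ h3m0 hstep3 t
          have hstep5 : ((2:ℝ) ^ (10 * d + 3) * (L / t)) ^ t
              = ((2:ℝ) ^ (10 * d + 3)) ^ t * (L / t) ^ t := mul_pow _ _ _
          have hexp2 : ((2:ℝ) ^ (10 * d + 3)) ^ t ≤ Real.exp ((10 * d + 3) * L) := by
            have h2e : (2:ℝ) ≤ Real.exp 1 := by
              have := Real.exp_one_gt_d9
              linarith
            have h1 : ((2:ℝ) ^ (10 * d + 3)) ^ t = 2 ^ ((10 * d + 3) * t) := by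
              rw [← pow_mul]
            have h2 : (2:ℝ) ^ ((10 * d + 3) * t) ≤ Real.exp 1 ^ ((10 * d + 3) * t) :=
              pow_le_pow_left₀ (by norm_num) h2e _
            have h3 : Real.exp 1 ^ ((10 * d + 3) * t) = Real.exp (((10 * d + 3) * t : ℕ)) := by
              rw [← Real.exp_nat_mul, mul_one]
            have h4 : (((10 * d + 3) * t : ℕ) : ℝ) ≤ (10 * d + 3) * L := by
              push_cast
              have : (0:ℝ) ≤ 10 * (d:ℝ) + 3 := by positivity
              nlinarith [htL]
            rw [h1]
            calc (2:ℝ) ^ ((10 * d + 3) * t) ≤ Real.exp 1 ^ ((10 * d + 3) * t) := h2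
              _ = Real.exp (((10 * d + 3) * t : ℕ)) := h3
              _ ≤ Real.exp ((10 * d + 3) * L) := Real.exp_le_exp.2 h4
          have hexpL : (L / t) ^ t ≤ Real.exp L := by
            have h1 : L / t ≤ Real.exp (L / t) := by
              have := Real.add_one_le_exp (L / (t:ℝ))
              linarith
            have h2 : (L / t) ^ t ≤ Real.exp (L / t) ^ t :=
              pow_le_pow_left₀ hLt0 h1 t
            have h3 : Real.exp (L / t) ^ t = Real.exp ((t:ℝ) * (L / t)) := by
              rw [Real.exp_nat_mul]
            have h4 : (t:ℝ) * (L / t) = L := by field_simp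
            rw [h3, h4] at h2
            exact h2
          calc (m:ℝ) ^ t / (Nat.factorial t : ℝ)
              ≤ (3 * (m:ℝ) / t) ^ t := by rw [← hstep2]; exact hstep1
            _ ≤ ((2:ℝ) ^ (10 * d + 3)) ^ t * (L / t) ^ t := by rw [← hstep5]; exact hstep4
            _ ≤ Real.exp ((10 * d + 3) * L) * Real.exp L := by
                apply mul_le_mul hexp2 hexpL (by positivity) (by positivity)
            _ = Real.exp ((10 * d + 4) * L) := by
                rw [← Real.exp_add]; ring_nf
      exact le_trans hB hCC
    -- (D) q^r bound
    have hD : q ^ r ≤ Real.exp (-(2:ℝ) ^ (7 * d) * L) := by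
      have hp : (1:ℝ) / 2 ^ (2 * d) ≤ (Nat.factorial d : ℝ) / ((d:ℝ) ^ d) := by
        have h1 : (d:ℝ) ^ d ≤ 4 ^ d * (Nat.factorial d : ℝ) := by
          have := pow_self_le_three_pow_mul_factorial d
          have h34 : (3:ℝ) ^ d ≤ 4 ^ d := pow_le_pow_left₀ (by norm_num) (by norm_num) d
          nlinarith [hFpos]
        rw [div_le_div_iff₀ (by positivity) hD2pos]
        have h2 : (4:ℝ) ^ d = 2 ^ (2 * d) := by
          rw [show (4:ℝ) = 2 ^ 2 by norm_num, ← pow_mul]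
        nlinarith
      have hqle : q ≤ Real.exp (-((Nat.factorial d : ℝ) / ((d:ℝ) ^ d))) := by
        have := Real.add_one_le_exp (-((Nat.factorial d : ℝ) / ((d:ℝ) ^ d)))
        rw [hq]
        linarith
      have h1 : q ^ r ≤ Real.exp (-((Nat.factorial d : ℝ) / ((d:ℝ) ^ d))) ^ r :=
        pow_le_pow_left₀ hq0 hqle r
      have h2 : Real.exp (-((Nat.factorial d : ℝ) / ((d:ℝ) ^ d))) ^ r
          = Real.exp (-(((Nat.factorial d : ℝ) / ((d:ℝ) ^ d)) * r)) := by
        rw [← Real.exp_nat_mul]; ring_nf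
      have hrlow : (2:ℝ) ^ (9 * d) * L ≤ (r:ℝ) := by
        rw [hrR]
        have h3 : (2:ℝ) ^ (9 * d) + 1 ≤ 2 ^ (10 * d) := by
          have h4 : (2:ℝ) ^ (9 * d) + 1 ≤ 2 ^ (9 * d) + 2 ^ (9 * d) := by
            have : (1:ℝ) ≤ 2 ^ (9 * d) := one_le_pow₀ one_le_two
            linarith
          have h5 : (2:ℝ) ^ (9 * d) + 2 ^ (9 * d) = 2 ^ (9 * d + 1) := by
            rw [pow_succ]; ring
          have h6 : (2:ℝ) ^ (9 * d + 1) ≤ 2 ^ (10 * d) :=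
            pow_le_pow_right₀ one_le_two (by omega)
          linarith
        have hkL' : (k:ℝ) ≤ L := hkL
        have hm' : (2:ℝ) ^ (10 * d) * L ≤ (m:ℝ) := hmlow
        nlinarith
      have h5 : (2:ℝ) ^ (7 * d) * L ≤ ((Nat.factorial d : ℝ) / ((d:ℝ) ^ d)) * r := by
        have h6 : (1 / (2:ℝ) ^ (2 * d)) * ((2:ℝ) ^ (9 * d) * L) = (2:ℝ) ^ (7 * d) * L := by
          rw [show (2:ℝ) ^ (9 * d) = 2 ^ (7 * d) * 2 ^ (2 * d) from by
            rw [← pow_add]; congr 1; omega]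
          have h8 : ((2:ℝ) ^ (2 * d)) ≠ 0 := by positivity
          field_simp
        have hr0 : (0:ℝ) ≤ (r:ℝ) := by positivity
        have h9 : (0:ℝ) < 1 / (2:ℝ) ^ (2 * d) := by positivity
        have h10 : (1 / (2:ℝ) ^ (2 * d)) * ((2:ℝ) ^ (9 * d) * L)
            ≤ (1 / (2:ℝ) ^ (2 * d)) * r :=
          mul_le_mul_of_nonneg_left hrlow (le_of_lt h9)
        have h11 : (1 / (2:ℝ) ^ (2 * d)) * r
            ≤ ((Nat.factorial d : ℝ) / ((d:ℝ) ^ d)) * r :=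
          mul_le_mul_of_nonneg_right hp hr0
        linarith
      calc q ^ r ≤ Real.exp (-(((Nat.factorial d : ℝ) / ((d:ℝ) ^ d)) * r)) := by
            rw [← h2]; exact h1
        _ ≤ Real.exp (-(2:ℝ) ^ (7 * d) * L) := by
            apply Real.exp_le_exp.2
            linarith
    -- combine
    have hCpos : (0:ℝ) ≤ ((m.choose r : ℕ) : ℝ) := by positivity
    have hqr0 : (0:ℝ) ≤ q ^ r := by positivity
    have htotal : (n:ℝ) ^ 2 * (m.choose r) * q ^ r
        ≤ Real.exp (2 * L) * Real.exp ((10 * d + 4) * L) * Real.exp (-(2:ℝ) ^ (7 * d) * L) := by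
      have h1 : (n:ℝ) ^ 2 * (m.choose r) ≤ Real.exp (2 * L) * Real.exp ((10 * d + 4) * L) := by
        apply mul_le_mul hA hC hCpos (by positivity)
      apply mul_le_mul h1 hD hqr0 (by positivity)
    have hfinal : Real.exp (2 * L) * Real.exp ((10 * d + 4) * L) *
        Real.exp (-(2:ℝ) ^ (7 * d) * L) < 1 := by
      rw [← Real.exp_add, ← Real.exp_add]
      rw [show (2 * L + (10 * d + 4) * L + -(2:ℝ) ^ (7 * d) * L)
          = ((10 * d + 6) - (2:ℝ) ^ (7 * d)) * L by ring]
      rw [Real.exp_lt_one_iff]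
      have h1 : (10 * (d:ℝ) + 7) ≤ (2:ℝ) ^ (7 * d) := by
        have := linear_lt_pow d hd1
        exact_mod_cast this
      nlinarith
    linarith
  -- multiply back
  have hpos : (0:ℝ) < ((d:ℝ) ^ d) ^ r := by positivity
  calc (n:ℝ) ^ 2 * (m.choose r) * (q ^ r * ((d:ℝ) ^ d) ^ r)
      = ((n:ℝ) ^ 2 * (m.choose r) * q ^ r) * ((d:ℝ) ^ d) ^ r := by ring
    _ < 1 * ((d:ℝ) ^ d) ^ r := by
        apply mul_lt_mul_of_pos_right hgoal hpos
    _ = ((d:ℝ) ^ d) ^ r := by ring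


/- **Statement 6.** -/
set_option maxHeartbeats 2000000 in
/-- For fixed `d ≥ 2` and `c₀ ≥ 1`, for all sufficiently large `n`: any graph
on `n` vertices in which every two distinct vertices are joined by at least
`2^(10d) · c₀ · log n` internally vertex-disjoint paths of length exactly `d` satisfies
`rc_k(G) ≤ d` for every `1 ≤ k ≤ c₀ log n`. -/
theorem rc_le_of_many_disjoint_paths
    (d : ℕ) (hd : 2 ≤ d) (c₀ : ℝ) (hc₀ : 1 ≤ c₀) :
    ∃ N : ℕ, ∀ n : ℕ, N ≤ n →
      ∀ G : SimpleGraph (Fin n),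
        ManyDisjointPaths G d ⌈(2:ℝ) ^ (10 * d) * c₀ * Real.logb 2 n⌉₊ →
        ∀ k : ℕ, 1 ≤ k → (k : ℝ) ≤ c₀ * Real.logb 2 n →
          rc G k ≤ (d : ℕ∞) := by
  classical
  refine ⟨2, ?_⟩
  intro n hn G hMany k hk1 hk2
  set m : ℕ := ⌈(2:ℝ) ^ (10 * d) * c₀ * Real.logb 2 n⌉₊ with hm
  -- basic numeric facts
  have hlogb1 : (1:ℝ) ≤ Real.logb 2 n := by
    have : Real.logb 2 2 ≤ Real.logb 2 n :=
      Real.logb_le_logb_of_le (by norm_num) (by norm_num) (by exact_mod_cast hn)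
    rwa [Real.logb_self_eq_one (by norm_num)] at this
  have hlogb0 : (0:ℝ) ≤ Real.logb 2 n := le_trans zero_le_one hlogb1
  have hLpos : (0:ℝ) < c₀ * Real.logb 2 n := by nlinarith
  have hmlow : (2:ℝ) ^ (10 * d) * (c₀ * Real.logb 2 n) ≤ (m:ℝ) := by
    rw [hm, ← mul_assoc]
    exact Nat.le_ceil _
  have hmhigh : (m:ℝ) ≤ (2:ℝ) ^ (10 * d) * (c₀ * Real.logb 2 n) + 1 := by
    rw [hm, ← mul_assoc]
    exact le_of_lt (Nat.ceil_lt_add_one (by positivity))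
  have hpow1 : (1:ℝ) ≤ (2:ℝ) ^ (10 * d) := one_le_pow₀ one_le_two
  have hkm : k ≤ m := by
    have : (k:ℝ) ≤ (m:ℝ) := by nlinarith
    exact_mod_cast this
  set r : ℕ := m - k + 1 with hr
  -- choose path families
  choose Pfam hPfam1 hPfam2 using hMany
  -- the bad sets
  set badAt : Fin n × Fin n → Finset (Sym2 (Fin n) → Fin d) := fun p =>
    if h : p.1 ≠ p.2 then
      Finset.univ.filter fun χ : Sym2 (Fin n) → Fin d =>
        (Finset.univ.filter fun i : Fin m =>
          ((Pfam p.1 p.2 h i).edges.map χ).Nodup).card < k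
    else ∅ with hbadAt
  set Dc := Fintype.card (Sym2 (Fin n) → Fin d) with hDc
  have hDcpos : 0 < Dc := by
    rw [hDc, Fintype.card_fun, Fintype.card_fin]
    have : 0 < d := by omega
    positivity
  -- per-pair counting bound
  have hbound : ∀ p ∈ (Finset.univ : Finset (Fin n)).offDiag,
      (badAt p).card * (d ^ d) ^ r
        ≤ m.choose r * (d ^ d - Nat.factorial d) ^ r * Dc := by
    intro p hp
    have hne : p.1 ≠ p.2 := (Finset.mem_offDiag.1 hp).2.2
    rw [hbadAt]
    simp only [ne_eq, dif_pos hne]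
    rw [hDc]
    exact card_bad_le hd hk1 hkm hne (Pfam p.1 p.2 hne)
      (hPfam1 p.1 p.2 hne) (hPfam2 p.1 p.2 hne)
  -- total bound and existence of good coloring
  have hexists : ∃ χ : Sym2 (Fin n) → Fin d,
      ∀ p ∈ (Finset.univ : Finset (Fin n)).offDiag, χ ∉ badAt p := by
    by_contra hno
    push_neg at hno
    set B := ((Finset.univ : Finset (Fin n)).offDiag).biUnion badAt with hB
    have hsub : (Finset.univ : Finset (Sym2 (Fin n) → Fin d)) ⊆ B := by
      intro χ _
      rw [hB, Finset.mem_biUnion]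
      obtain ⟨p, hp1, hp2⟩ := hno χ
      exact ⟨p, hp1, hp2⟩
    have hS1 : Dc ≤ B.card := by
      calc Dc = (Finset.univ : Finset (Sym2 (Fin n) → Fin d)).card := Finset.card_univ.symm
        _ ≤ B.card := Finset.card_le_card hsub
    set K := m.choose r * (d ^ d - Nat.factorial d) ^ r * Dc with hK
    have hS2 : B.card * (d ^ d) ^ r
        ≤ ((Finset.univ : Finset (Fin n)).offDiag).card * K := by
      calc B.card * (d ^ d) ^ r
          ≤ (∑ p ∈ (Finset.univ : Finset (Fin n)).offDiag, (badAt p).card) * (d ^ d) ^ r :=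
            Nat.mul_le_mul_right _ Finset.card_biUnion_le
        _ = ∑ p ∈ (Finset.univ : Finset (Fin n)).offDiag, (badAt p).card * (d ^ d) ^ r := by
            rw [Finset.sum_mul]
        _ ≤ ∑ _p ∈ (Finset.univ : Finset (Fin n)).offDiag, K := Finset.sum_le_sum hbound
        _ = ((Finset.univ : Finset (Fin n)).offDiag).card * K := by
            rw [Finset.sum_const, smul_eq_mul]
    have hS3 : ((Finset.univ : Finset (Fin n)).offDiag).card ≤ n ^ 2 := by
      rw [Finset.offDiag_card, Finset.card_univ, Fintype.card_fin]
      exact (Nat.sub_le _ _).trans (le_of_eq (pow_two n).symm)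
    have hNat : Dc * (d ^ d) ^ r ≤ n ^ 2 * K := by
      calc Dc * (d ^ d) ^ r ≤ B.card * (d ^ d) ^ r := Nat.mul_le_mul_right _ hS1
        _ ≤ ((Finset.univ : Finset (Fin n)).offDiag).card * K := hS2
        _ ≤ n ^ 2 * K := Nat.mul_le_mul_right _ hS3
    -- move to the reals and contradict numeric_bound
    have hreal := numeric_bound hd hc₀ hn hk1 hkm hk2 hmlow hmhigh
    have hDcR : (0:ℝ) < (Dc : ℝ) := by exact_mod_cast hDcpos
    have hlt : ((n:ℝ) ^ 2 * (m.choose (m - k + 1)) *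
          (((d ^ d - Nat.factorial d : ℕ) : ℝ)) ^ (m - k + 1)) * (Dc:ℝ)
        < ((d:ℝ) ^ d) ^ (m - k + 1) * (Dc:ℝ) :=
      mul_lt_mul_of_pos_right hreal hDcR
    have hNatR : ((Dc : ℝ)) * (((d:ℝ) ^ d) ^ r) ≤ (n:ℝ) ^ 2 * ((m.choose r : ℝ) *
        (((d ^ d - Nat.factorial d : ℕ) : ℝ)) ^ r * (Dc : ℝ)) := by
      have := hNat
      have hcast : ((Dc * (d ^ d) ^ r : ℕ) : ℝ) ≤ ((n ^ 2 * K : ℕ) : ℝ) := by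
        exact_mod_cast this
      rw [hK] at hcast
      push_cast at hcast
      calc ((Dc : ℝ)) * (((d:ℝ) ^ d) ^ r) = ((Dc : ℝ)) * (((d:ℝ) ^ (d * r))) := by
            rw [pow_mul]
        _ ≤ (n:ℝ) ^ 2 * ((m.choose r : ℝ) *
            (((d ^ d - Nat.factorial d : ℕ) : ℝ)) ^ r * (Dc : ℝ)) := by
            convert hcast using 2 <;> push_cast <;> ring
    rw [hr] at hNatR
    nlinarith [hNatR, hlt]
  obtain ⟨χ, hχ⟩ := hexists
  -- conclude
  apply sInf_le
  refine ⟨d, rfl, fun e => (χ e : ℕ), fun e => (χ e).isLt, ?_⟩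
  intro u v huv
  have hpmem : ((u, v) : Fin n × Fin n) ∈ (Finset.univ : Finset (Fin n)).offDiag :=
    Finset.mem_offDiag.2 ⟨Finset.mem_univ _, Finset.mem_univ _, huv⟩
  have hnotbad := hχ (u, v) hpmem
  rw [hbadAt] at hnotbad
  simp only [ne_eq, dif_pos huv] at hnotbad
  rw [Finset.mem_filter] at hnotbad
  push_neg at hnotbad
  have hcnt : k ≤ (Finset.univ.filter fun i : Fin m =>
      ((Pfam u v huv i).edges.map χ).Nodup).card := hnotbad (Finset.mem_univ _)
  obtain ⟨T, hT, hTcard⟩ := Finset.exists_subset_card_eq hcnt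
  refine ⟨fun j => Pfam u v huv (T.orderEmbOfFin hTcard j), ?_, ?_⟩
  · intro j
    have hmem : T.orderEmbOfFin hTcard j ∈ T := Finset.orderEmbOfFin_mem T hTcard j
    have hrb := (Finset.mem_filter.1 (hT hmem)).2
    constructor
    · exact (hPfam1 u v huv _).1
    · have : (Pfam u v huv (T.orderEmbOfFin hTcard j)).edges.map (fun e => ((χ e : ℕ)))
          = ((Pfam u v huv (T.orderEmbOfFin hTcard j)).edges.map χ).map (fun x : Fin d => (x : ℕ)) := by
        rw [List.map_map]
        rfl
      rw [this]
      exact List.Nodup.map (fun a b hab => Fin.val_injective hab) hrb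
  · intro i j hij
    have hinj : T.orderEmbOfFin hTcard i ≠ T.orderEmbOfFin hTcard j :=
      fun h => hij ((T.orderEmbOfFin hTcard).injective h)
    exact hPfam2 u v huv _ _ hinj

end RainbowFormal
end
end

section
/- For every connected graph G on n ≥ 2 vertices, rc₁(G) ≤ n − 1; moreover, rc₁(G) = n − 1 if and only if G is a tree. -/
open MeasureTheory Filter
open scoped ENNReal

noncomputable section

namespace RainbowFormal

section Proofs
open SimpleGraph

variable {V : Type*}

lemma exists_rainbow {G H : SimpleGraph V} (hle : H ≤ G) {u v : V} (hr : H.Reachable u v)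
    (χ : Sym2 V → ℕ) (hχ : Set.InjOn χ H.edgeSet) :
    ∃ p : G.Walk u v, IsRainbowPath χ p := by
  classical
  obtain ⟨w⟩ := hr
  have hp : w.bypass.IsPath := w.bypass_isPath
  have hsub : ∀ e ∈ w.bypass.edges, e ∈ H.edgeSet := fun e he =>
    w.bypass.edges_subset_edgeSet he
  refine ⟨w.bypass.transfer G (fun e he => (edgeSet_mono hle) (hsub e he)), ?_, ?_⟩
  · rw [Walk.isPath_def, Walk.support_transfer]
    exact hp.support_nodup
  · rw [Walk.edges_transfer]
    exact hp.edges_nodup.map_on fun e1 h1 e2 h2 heq => hχ (hsub e1 h1) (hsub e2 h2) heq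

lemma internallyDisjoint_one {G : SimpleGraph V} {u v : V} (P : Fin 1 → G.Walk u v) :
    InternallyDisjoint P := fun i j hij => absurd (Subsingleton.elim i j) hij

lemma isRainbowPath_reverse {G : SimpleGraph V} {u v : V} {χ : Sym2 V → ℕ} {p : G.Walk u v}
    (h : IsRainbowPath χ p) : IsRainbowPath χ p.reverse := by
  refine ⟨h.1.reverse, ?_⟩
  rw [Walk.edges_reverse, List.map_reverse]
  exact List.nodup_reverse.mpr h.2

lemma reachable_deleteEdges_or {G : SimpleGraph V} (S : Set (Sym2 V)) {u v : V}
    (p : G.Walk u v) :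
    (G.deleteEdges S).Reachable u v ∨
      ∃ a b : V, s(a, b) ∈ S ∧ (G.deleteEdges S).Reachable u a := by
  induction p with
  | nil => exact Or.inl (Reachable.refl _)
  | @cons u u' w h q ih =>
    by_cases hm : s(u, u') ∈ S
    · exact Or.inr ⟨u, u', hm, Reachable.refl _⟩
    · have hadj : (G.deleteEdges S).Adj u u' := by
        rw [deleteEdges_adj]; exact ⟨h, hm⟩
      rcases ih with h1 | ⟨a, b, hab, h2⟩
      · exact Or.inl (hadj.reachable.trans h1)
      · exact Or.inr ⟨a, b, hab, hadj.reachable.trans h2⟩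


lemma connected_deleteEdges {G : SimpleGraph V} (hG : G.Connected) {x y : V}
    (hxy : (G.deleteEdges {s(x, y)}).Reachable x y) :
    (G.deleteEdges {s(x, y)}).Connected := by
  have key : ∀ u : V, (G.deleteEdges {s(x, y)}).Reachable u x := by
    intro u
    obtain ⟨w⟩ := hG.preconnected u x
    rcases reachable_deleteEdges_or {s(x, y)} w with h | ⟨a, b, hab, h⟩
    · exact h
    · simp only [Set.mem_singleton_iff, Sym2.eq_iff] at hab
      rcases hab with ⟨rfl, rfl⟩ | ⟨rfl, rfl⟩
      · exact h
      · exact h.trans hxy.symm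
  have : Nonempty V := hG.nonempty
  exact ⟨fun u v => (key u).trans (key v).symm⟩

lemma exists_spanning_tree_aux [Finite V] :
    ∀ (n : ℕ) (G : SimpleGraph V), G.edgeSet.ncard = n → G.Connected →
      ∃ T, T ≤ G ∧ T.IsTree := by
  intro n
  induction n using Nat.strong_induction_on with
  | _ n ih =>
    intro G hcard hG
    by_cases hac : G.IsAcyclic
    · exact ⟨G, le_rfl, ⟨hG, hac⟩⟩
    · rw [isAcyclic_iff_forall_adj_isBridge] at hac
      push_neg at hac
      obtain ⟨x, y, hadj, hbr⟩ := hac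
      rw [isBridge_iff] at hbr
      have hreach : (G.deleteEdges {s(x, y)}).Reachable x y := by
        by_contra hcon
        exact hbr hcon
      have hconn := connected_deleteEdges hG hreach
      have hmem : s(x, y) ∈ G.edgeSet := hadj
      have hlt : (G.deleteEdges {s(x, y)}).edgeSet.ncard < n := by
        rw [edgeSet_deleteEdges, ← hcard]
        exact Set.ncard_diff_singleton_lt_of_mem hmem (Set.toFinite _)
      obtain ⟨T, hT, hTree⟩ := ih _ hlt (G.deleteEdges {s(x, y)}) rfl hconn
      exact ⟨T, hT.trans (deleteEdges_le _), hTree⟩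

lemma exists_spanning_tree [Finite V] (G : SimpleGraph V) (hG : G.Connected) :
    ∃ T, T ≤ G ∧ T.IsTree :=
  exists_spanning_tree_aux _ G rfl hG


lemma exists_coloring_of_tree [Fintype V] (hV : 2 ≤ Fintype.card V)
    {G T : SimpleGraph V} (hle : T ≤ G) (hT : T.IsTree) :
    ∃ χ : Sym2 V → ℕ, (∀ e, χ e < Fintype.card V - 1) ∧ RainbowKConnectedColoring G 1 χ := by
  classical
  have hcard : T.edgeFinset.card = Fintype.card V - 1 := by
    have := hT.card_edgeFinset
    omega
  set S := T.edgeFinset with hS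
  let κ := S.equivFin
  let χ : Sym2 V → ℕ := fun e => if h : e ∈ S then (κ ⟨e, h⟩ : ℕ) else 0
  have hbound : ∀ e, χ e < Fintype.card V - 1 := by
    intro e
    by_cases h : e ∈ S
    · simpa [χ, h, ← hcard] using (κ ⟨e, h⟩).isLt
    · simp only [χ, h, dif_neg, not_false_iff]
      omega
  have hinj : Set.InjOn χ T.edgeSet := by
    intro e1 h1 e2 h2 heq
    rw [← mem_edgeFinset] at h1 h2
    simp only [χ, dif_pos (show e1 ∈ S from h1), dif_pos (show e2 ∈ S from h2)] at heq
    have := κ.injective (Fin.val_injective heq)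
    exact Subtype.ext_iff.mp this
  refine ⟨χ, hbound, fun u v huv => ?_⟩
  obtain ⟨p, hp⟩ := exists_rainbow hle (hT.isConnected.preconnected u v) χ hinj
  exact ⟨fun _ => p, fun _ => hp, internallyDisjoint_one _⟩


lemma tree_injOn_of_rainbow [Fintype V] {G : SimpleGraph V} (hT : G.IsTree)
    {χ : Sym2 V → ℕ} (hR : RainbowKConnectedColoring G 1 χ) :
    Set.InjOn χ G.edgeSet := by
  classical
  intro e1 h1 e2 h2 hcol
  by_contra hne
  induction e1 using Sym2.ind with | _ a b => ?_
  induction e2 using Sym2.ind with | _ c d => ?_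
  have hadj1 : G.Adj a b := h1
  have hadj2 : G.Adj c d := h2
  have hbr : ∀ ⦃x y : V⦄, G.Adj x y → ¬(G.deleteEdges {s(x, y)}).Reachable x y := by
    intro x y hxy
    have := (isAcyclic_iff_forall_adj_isBridge.mp hT.IsAcyclic) hxy
    exact isBridge_iff.mp this
  -- c and d are reachable in G - e1
  have hcd : (G.deleteEdges {s(a, b)}).Reachable c d := by
    refine Adj.reachable ?_
    rw [deleteEdges_adj]
    simp only [Set.mem_singleton_iff]
    exact ⟨hadj2, fun h => hne h.symm⟩
  have hab2 : (G.deleteEdges {s(c, d)}).Reachable a b := by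
    refine Adj.reachable ?_
    rw [deleteEdges_adj]
    exact ⟨hadj1, by simpa using hne⟩
  have final : ∀ u v' : V,
      ¬(G.deleteEdges {s(a, b)}).Reachable u v' →
      ¬(G.deleteEdges {s(c, d)}).Reachable u v' → False := by
    intro u v' hn1 hn2
    have hune : u ≠ v' := fun h => hn1 (h ▸ Reachable.refl u)
    obtain ⟨P, hP, _⟩ := hR u v' hune
    obtain ⟨hpath, hnodup⟩ := hP 0
    have he1 : s(a, b) ∈ (P 0).edges := by
      by_contra hmem
      exact hn1 ⟨(P 0).toDeleteEdges {s(a, b)}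
        (fun e he => by simp only [Set.mem_singleton_iff]; rintro rfl; exact hmem he)⟩
    have he2 : s(c, d) ∈ (P 0).edges := by
      by_contra hmem
      exact hn2 ⟨(P 0).toDeleteEdges {s(c, d)}
        (fun e he => by simp only [Set.mem_singleton_iff]; rintro rfl; exact hmem he)⟩
    exact hne (List.inj_on_of_nodup_map hnodup he1 he2 hcol)
  -- choose u ∈ {a, b} not reaching c (hence nor d) in G - e1
  obtain ⟨u, huc, hud⟩ : ∃ u : V, ¬(G.deleteEdges {s(a, b)}).Reachable u c ∧
      ¬(G.deleteEdges {s(a, b)}).Reachable u d := by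
    by_cases hac : (G.deleteEdges {s(a, b)}).Reachable a c
    · have hbc : ¬(G.deleteEdges {s(a, b)}).Reachable b c :=
        fun h => hbr hadj1 (hac.trans h.symm)
      exact ⟨b, hbc, fun h => hbc (h.trans hcd.symm)⟩
    · exact ⟨a, hac, fun h => hac (h.trans hcd.symm)⟩
  -- choose v' ∈ {c, d} not reachable from u in G - e2
  by_cases huc2 : (G.deleteEdges {s(c, d)}).Reachable u c
  · have hud2 : ¬(G.deleteEdges {s(c, d)}).Reachable u d :=
      fun h => hbr hadj2 (huc2.symm.trans h)
    exact final u d hud hud2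
  · exact final u c huc huc2


lemma nontree_coloring [Fintype V] {G : SimpleGraph V} (hG : G.Connected)
    {T : SimpleGraph V} (hle : T ≤ G) (hT : T.IsTree) (hnt : ¬G.IsTree) :
    ∃ χ : Sym2 V → ℕ, (∀ e, χ e < Fintype.card V - 2) ∧ RainbowKConnectedColoring G 1 χ := by
  classical
  have hne : ¬G ≤ T := fun h => hnt (le_antisymm h hle ▸ hT)
  obtain ⟨x, y, hGxy, hTxy⟩ : ∃ x y, G.Adj x y ∧ ¬T.Adj x y := by
    by_contra h
    push_neg at h
    exact hne fun v w hvw => h v w hvw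
  obtain ⟨q0⟩ := hT.isConnected.preconnected x y
  obtain ⟨p, hp⟩ : ∃ p : T.Walk x y, p.IsPath := ⟨q0.bypass, q0.bypass_isPath⟩
  cases p with
  | nil => exact absurd rfl hGxy.ne
  | @cons _ w _ hxw q =>
    cases q with
    | nil => exact absurd hxw hTxy
    | @cons _ z _ hwz r =>
      rw [Walk.cons_isPath_iff] at hp
      obtain ⟨hp2, hxnot⟩ := hp
      rw [Walk.cons_isPath_iff] at hp2
      obtain ⟨hr, hwnot⟩ := hp2
      have hxz : x ≠ z := by
        intro h
        exact hxnot (by rw [Walk.support_cons, h]; exact List.mem_cons_of_mem _ r.start_mem_support)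
      have hf1f2 : s(x, w) ≠ s(w, z) := by
        intro hcol
        rw [Sym2.eq_iff] at hcol
        rcases hcol with ⟨h1, h2⟩ | ⟨h1, h2⟩
        · exact hxw.ne h1
        · exact hxz h1
      -- basic bridge facts
      have hbr1 : ¬(T.deleteEdges {s(x, w)}).Reachable x w :=
        isBridge_iff.mp ((isAcyclic_iff_forall_adj_isBridge.mp hT.IsAcyclic) hxw)
      have hbr2 : ¬(T.deleteEdges {s(w, z)}).Reachable w z :=
        isBridge_iff.mp ((isAcyclic_iff_forall_adj_isBridge.mp hT.IsAcyclic) hwz)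
      have hD1 : T.deleteEdges {s(x, w), s(w, z)} ≤ T.deleteEdges {s(x, w)} := by
        intro a b hab
        rw [deleteEdges_adj] at hab ⊢
        exact ⟨hab.1, fun h => hab.2 (by simp_all)⟩
      have hD2 : T.deleteEdges {s(x, w), s(w, z)} ≤ T.deleteEdges {s(w, z)} := by
        intro a b hab
        rw [deleteEdges_adj] at hab ⊢
        exact ⟨hab.1, fun h => hab.2 (by simp_all)⟩
      have hyz : (T.deleteEdges {s(x, w), s(w, z)}).Reachable y z := by
        refine (Reachable.symm ⟨r.toDeleteEdges _ fun e he hes => ?_⟩)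
        rcases hes with hes | hes
        · exact hwnot (r.snd_mem_support_of_mem_edges (hes ▸ he))
        · exact hwnot (r.fst_mem_support_of_mem_edges (by simp only [Set.mem_singleton_iff] at hes; exact hes ▸ he))
      -- the coloring
      have f1mem : s(x, w) ∈ T.edgeFinset := mem_edgeFinset.mpr hxw
      have f2mem : s(w, z) ∈ T.edgeFinset := mem_edgeFinset.mpr hwz
      set E2 := T.edgeFinset.erase s(w, z) with hE2def
      have hf1E2 : s(x, w) ∈ E2 := Finset.mem_erase.mpr ⟨hf1f2, f1mem⟩
      have hcardT : T.edgeFinset.card + 1 = Fintype.card V := hT.card_edgeFinset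
      have hE2card : E2.card = Fintype.card V - 2 := by
        rw [hE2def, Finset.card_erase_of_mem f2mem]
        omega
      set κ := E2.equivFin with hκdef
      set χ : Sym2 V → ℕ := fun e' =>
        if h : e' ∈ E2 then (κ ⟨e', h⟩ : ℕ)
        else if e' = s(w, z) ∨ e' = s(x, y) then (κ ⟨s(x, w), hf1E2⟩ : ℕ) else 0 with hχdef
      have hval : ∀ e' (h : e' ∈ E2), χ e' = (κ ⟨e', h⟩ : ℕ) := fun e' h => dif_pos h
      have hvalinj : ∀ {e1' e2'} (h1 : e1' ∈ E2) (h2 : e2' ∈ E2),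
          χ e1' = χ e2' → e1' = e2' := by
        intro e1' e2' h1 h2 heq
        rw [hval _ h1, hval _ h2] at heq
        exact Subtype.ext_iff.mp (κ.injective (Fin.val_injective heq))
      have hspec : ∀ e', (e' = s(w, z) ∨ e' = s(x, y)) →
          χ e' = (κ ⟨s(x, w), hf1E2⟩ : ℕ) := by
        intro e' he'
        have hnm : e' ∉ E2 := by
          rcases he' with rfl | rfl
          · exact Finset.notMem_erase _ _
          · intro hmem
            exact hTxy (mem_edgeFinset.mp (Finset.mem_of_mem_erase hmem))
        rw [hχdef]
        simp only
        rw [dif_neg hnm, if_pos he']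
      have hmix : ∀ e' (h : e' ∈ E2), e' ≠ s(x, w) →
          χ e' ≠ (κ ⟨s(x, w), hf1E2⟩ : ℕ) := by
        intro e' h hne' heq
        rw [hval _ h] at heq
        exact hne' (Subtype.ext_iff.mp (κ.injective (Fin.val_injective heq)))
      -- bounds
      have hE2pos : 0 < E2.card := Finset.card_pos.mpr ⟨_, hf1E2⟩
      have hbounds : ∀ e', χ e' < Fintype.card V - 2 := by
        intro e'
        rw [← hE2card]
        by_cases h : e' ∈ E2
        · rw [hval _ h]; exact (κ ⟨e', h⟩).isLt
        · rw [hχdef]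
          simp only
          rw [dif_neg h]
          split
          · exact (κ _).isLt
          · exact hE2pos
      -- the three injectivity statements
      have hinj1 : Set.InjOn χ ((T.deleteEdges {s(x, w)}).edgeSet) := by
        rw [edgeSet_deleteEdges]
        intro d1 hd1 d2 hd2 heq
        obtain ⟨hd1T, hd1f⟩ := hd1
        obtain ⟨hd2T, hd2f⟩ := hd2
        simp only [Set.mem_singleton_iff] at hd1f hd2f
        by_cases h1 : d1 = s(w, z) <;> by_cases h2 : d2 = s(w, z)
        · rw [h1, h2]
        · exact absurd (by rw [← heq, hspec d1 (Or.inl h1)])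
            (hmix d2 (Finset.mem_erase.mpr ⟨h2, mem_edgeFinset.mpr hd2T⟩) hd2f)
        · exact absurd (by rw [heq, hspec d2 (Or.inl h2)])
            (hmix d1 (Finset.mem_erase.mpr ⟨h1, mem_edgeFinset.mpr hd1T⟩) hd1f)
        · exact hvalinj (Finset.mem_erase.mpr ⟨h1, mem_edgeFinset.mpr hd1T⟩)
            (Finset.mem_erase.mpr ⟨h2, mem_edgeFinset.mpr hd2T⟩) heq
      have hinj2 : Set.InjOn χ ((T.deleteEdges {s(w, z)}).edgeSet) := by
        rw [edgeSet_deleteEdges]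
        intro d1 hd1 d2 hd2 heq
        simp only [Set.mem_diff, Set.mem_singleton_iff] at hd1 hd2
        exact hvalinj (Finset.mem_erase.mpr ⟨hd1.2, mem_edgeFinset.mpr hd1.1⟩)
          (Finset.mem_erase.mpr ⟨hd2.2, mem_edgeFinset.mpr hd2.1⟩) heq
      -- the auxiliary graph for the main case
      set H' := fromEdgeSet ((T.edgeSet \ {s(x, w), s(w, z)}) ∪ {s(x, y)}) with hH'def
      have hinj3 : Set.InjOn χ H'.edgeSet := by
        have hsub : H'.edgeSet ⊆ (T.edgeSet \ {s(x, w), s(w, z)}) ∪ {s(x, y)} := by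
          rw [hH'def, edgeSet_fromEdgeSet]
          exact fun e he => he.1
        intro d1 hd1 d2 hd2 heq
        have hd1' := hsub hd1
        have hd2' := hsub hd2
        have hE2of : ∀ d, d ∈ T.edgeSet \ {s(x, w), s(w, z)} → d ∈ E2 ∧ d ≠ s(x, w) := by
          intro d hd
          simp only [Set.mem_diff, Set.mem_insert_iff, Set.mem_singleton_iff, not_or] at hd
          exact ⟨Finset.mem_erase.mpr ⟨hd.2.2, mem_edgeFinset.mpr hd.1⟩, hd.2.1⟩
        rcases hd1' with hd1' | hd1' <;> rcases hd2' with hd2' | hd2'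
        · exact hvalinj (hE2of d1 hd1').1 (hE2of d2 hd2').1 heq
        · exact absurd (by rw [heq, hspec d2 (Or.inr hd2')])
            (hmix d1 (hE2of d1 hd1').1 (hE2of d1 hd1').2)
        · exact absurd (by rw [← heq, hspec d1 (Or.inr hd1')])
            (hmix d2 (hE2of d2 hd2').1 (hE2of d2 hd2').2)
        · rw [Set.mem_singleton_iff] at hd1' hd2'
          rw [hd1', hd2']
      have hH'G : H' ≤ G := by
        intro a b hab
        rw [hH'def, fromEdgeSet_adj] at hab
        obtain ⟨hmem, hne'⟩ := hab
        rcases hmem with h | h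
        · exact hle (T.mem_edgeSet.mp h.1)
        · rw [Set.mem_singleton_iff] at h
          exact G.mem_edgeSet.mp (h ▸ G.mem_edgeSet.mpr hGxy)
      have hDH' : T.deleteEdges {s(x, w), s(w, z)} ≤ H' := by
        intro a b hab
        rw [deleteEdges_adj] at hab
        rw [hH'def, fromEdgeSet_adj]
        exact ⟨Or.inl ⟨T.mem_edgeSet.mpr hab.1, hab.2⟩, hab.1.ne⟩
      have hxyH' : H'.Adj x y := by
        rw [hH'def, fromEdgeSet_adj]
        exact ⟨Or.inr rfl, hGxy.ne⟩
      -- the main construction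
      have hcons : ∀ u' v' : V,
          (T.deleteEdges {s(x, w), s(w, z)}).Reachable u' x →
          (T.deleteEdges {s(x, w), s(w, z)}).Reachable v' z →
          ∃ p : G.Walk u' v', IsRainbowPath χ p := by
        intro u' v' hux hvz
        have hreach : H'.Reachable u' v' :=
          ((hux.mono hDH').trans hxyH'.reachable).trans
            ((hyz.mono hDH').trans (hvz.mono hDH').symm)
        exact exists_rainbow hH'G hreach χ hinj3
      -- final assembly
      refine ⟨χ, hbounds, fun u v huv => ?_⟩
      suffices hsuff : ∃ p : G.Walk u v, IsRainbowPath χ p by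
        obtain ⟨p, hpr⟩ := hsuff
        exact ⟨fun _ => p, fun _ => hpr, internallyDisjoint_one _⟩
      by_cases h1 : (T.deleteEdges {s(x, w)}).Reachable u v
      · exact exists_rainbow (le_trans (deleteEdges_le _) hle) h1 χ hinj1
      by_cases h2 : (T.deleteEdges {s(w, z)}).Reachable u v
      · exact exists_rainbow (le_trans (deleteEdges_le _) hle) h2 χ hinj2
      -- main case
      obtain ⟨qu⟩ := hT.isConnected.preconnected u v
      have hu3 := reachable_deleteEdges_or {s(x, w), s(w, z)} qu
      have hv3 := reachable_deleteEdges_or {s(x, w), s(w, z)} qu.reverse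
      have hu4 : (T.deleteEdges {s(x, w), s(w, z)}).Reachable u x ∨
          (T.deleteEdges {s(x, w), s(w, z)}).Reachable u w ∨
          (T.deleteEdges {s(x, w), s(w, z)}).Reachable u z := by
        rcases hu3 with h | ⟨a, b, hab, h⟩
        · exact absurd (h.mono hD1) h1
        · simp only [Set.mem_insert_iff, Set.mem_singleton_iff, Sym2.eq_iff] at hab
          rcases hab with (⟨rfl, rfl⟩ | ⟨rfl, rfl⟩) | (⟨rfl, rfl⟩ | ⟨rfl, rfl⟩)
          · exact Or.inl h
          · exact Or.inr (Or.inl h)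
          · exact Or.inr (Or.inl h)
          · exact Or.inr (Or.inr h)
      have hv4 : (T.deleteEdges {s(x, w), s(w, z)}).Reachable v x ∨
          (T.deleteEdges {s(x, w), s(w, z)}).Reachable v w ∨
          (T.deleteEdges {s(x, w), s(w, z)}).Reachable v z := by
        rcases hv3 with h | ⟨a, b, hab, h⟩
        · exact absurd (h.symm.mono hD1) h1
        · simp only [Set.mem_insert_iff, Set.mem_singleton_iff, Sym2.eq_iff] at hab
          rcases hab with (⟨rfl, rfl⟩ | ⟨rfl, rfl⟩) | (⟨rfl, rfl⟩ | ⟨rfl, rfl⟩)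
          · exact Or.inl h
          · exact Or.inr (Or.inl h)
          · exact Or.inr (Or.inl h)
          · exact Or.inr (Or.inr h)
      have hxwD2 : (T.deleteEdges {s(w, z)}).Adj x w := by
        rw [deleteEdges_adj]
        exact ⟨hxw, by simpa using hf1f2⟩
      have hwzD1 : (T.deleteEdges {s(x, w)}).Adj w z := by
        rw [deleteEdges_adj]
        refine ⟨hwz, ?_⟩
        simp only [Set.mem_singleton_iff]
        exact fun h => hf1f2 h.symm
      rcases hu4 with hux | huw | huz <;> rcases hv4 with hvx | hvw | hvz
      · exact absurd ((hux.trans hvx.symm).mono hD1) h1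
      · exact absurd (((hux.mono hD2).trans hxwD2.reachable).trans (hvw.mono hD2).symm) h2
      · exact hcons u v hux hvz
      · exact absurd (((huw.mono hD2).trans hxwD2.reachable.symm).trans (hvx.mono hD2).symm) h2
      · exact absurd ((huw.trans hvw.symm).mono hD1) h1
      · exact absurd (((huw.mono hD1).trans hwzD1.reachable).trans (hvz.mono hD1).symm) h1
      · obtain ⟨pq, hpq⟩ := hcons v u hvx huz
        exact ⟨pq.reverse, isRainbowPath_reverse hpq⟩
      · exact absurd (((huz.mono hD1).trans hwzD1.reachable.symm).trans (hvw.mono hD1).symm) h1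
      · exact absurd ((huz.trans hvz.symm).mono hD1) h1


end Proofs

/-- For every connected graph `G` on `n ≥ 2` vertices, `rc₁(G) ≤ n - 1`,
with equality iff `G` is a tree. -/
theorem rc_one_le_card_sub_one {V : Type*} [Fintype V] (G : SimpleGraph V)
    (hV : 2 ≤ Fintype.card V) (hG : G.Connected) :
    rc G 1 ≤ (Fintype.card V : ℕ∞) - 1 ∧
      (rc G 1 = (Fintype.card V : ℕ∞) - 1 ↔ G.IsTree) := by
  classical
  obtain ⟨T, hle, hT⟩ := exists_spanning_tree G hG
  have hupper : rc G 1 ≤ ((Fintype.card V - 1 : ℕ) : ℕ∞) := by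
    obtain ⟨χ, hχ, hR⟩ := exists_coloring_of_tree hV hle hT
    exact sInf_le ⟨Fintype.card V - 1, rfl, χ, hχ, hR⟩
  have hcast : (Fintype.card V : ℕ∞) - 1 = ((Fintype.card V - 1 : ℕ) : ℕ∞) := by
    rw [ENat.coe_sub, Nat.cast_one]
  have hlower : G.IsTree → ((Fintype.card V - 1 : ℕ) : ℕ∞) ≤ rc G 1 := by
    intro htree
    refine le_sInf ?_
    rintro t ⟨m, rfl, χ, hχ, hR⟩
    rw [Nat.cast_le]
    have hinj := tree_injOn_of_rainbow htree hR
    have hcard : G.edgeFinset.card ≤ m := by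
      have h := Finset.card_le_card_of_injOn χ
        (fun e he => Finset.mem_range.mpr (hχ e))
        (fun e1 h1 e2 h2 => hinj (SimpleGraph.mem_edgeFinset.mp h1)
          (SimpleGraph.mem_edgeFinset.mp h2))
      simpa using h
    have := htree.card_edgeFinset
    omega
  refine ⟨by rw [hcast]; exact hupper, ?_, ?_⟩
  · intro heq
    by_contra hnt
    obtain ⟨χ, hχ, hR⟩ := nontree_coloring hG hle hT hnt
    have h2 : rc G 1 ≤ ((Fintype.card V - 2 : ℕ) : ℕ∞) :=
      sInf_le ⟨_, rfl, χ, hχ, hR⟩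
    rw [heq, hcast, Nat.cast_le] at h2
    omega
  · intro htree
    rw [hcast]
    exact le_antisymm hupper (hlower htree)

end RainbowFormal
end
end
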